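/- Let W : C → ℝ be defined on compact convex subsets C of ℝ^d by the anisotropic perimeter W(C) = lim_{ε→0} (vol(C + εK) − vol(C))/ε, where K is a fixed compact convex body with nonempty interior. Then for every compact convex set V with vol(V) = vol(K), one has W(V) ≥ d · vol(K), with equality when V = K. -/

import Mathlib

open MeasureTheory Set Pointwise Filter ENNReal NNReal

namespace WulffAux

lemma layercake {α : Type*} [MeasurableSpace α] (μ : Measure α) [SigmaFinite μ]
    {f : α → ℝ≥0∞} (hf : Measurable f) :
    ∫⁻ x, f x ∂μ = ∫⁻ r in Ioi (0:ℝ), μ {x | ENNReal.ofReal r < f x} := by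
  have hm1 : Measurable (fun p : α × ℝ => ENNReal.ofReal p.2) :=
    ENNReal.measurable_ofReal.comp measurable_snd
  have hm2 : Measurable (fun p : α × ℝ => f p.1) := hf.comp measurable_fst
  have hS : MeasurableSet {p : α × ℝ | 0 < p.2 ∧ ENNReal.ofReal p.2 < f p.1} :=
    (measurable_snd measurableSet_Ioi).inter ((hm1.prodMk hm2) measurableSet_lt')
  have h1 : (μ.prod volume) {p : α × ℝ | 0 < p.2 ∧ ENNReal.ofReal p.2 < f p.1}
      = ∫⁻ x, f x ∂μ := by
    rw [Measure.prod_apply hS]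
    congr 1
    ext x
    have he : (Prod.mk x ⁻¹' {p : α × ℝ | 0 < p.2 ∧ ENNReal.ofReal p.2 < f p.1})
        = {r : ℝ | 0 < r ∧ ENNReal.ofReal r < f x} := rfl
    rw [he]
    rcases eq_or_ne (f x) ∞ with h | h
    · have : {r : ℝ | 0 < r ∧ ENNReal.ofReal r < f x} = Ioi 0 := by
        ext r; simp [h, ENNReal.ofReal_lt_top]
      rw [this, h, Real.volume_Ioi]
    · have : {r : ℝ | 0 < r ∧ ENNReal.ofReal r < f x} = Ioo 0 ((f x).toReal) := by
        ext r
        simp only [mem_setOf_eq, mem_Ioo]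
        constructor
        · rintro ⟨h0, hlt⟩
          exact ⟨h0, (ENNReal.ofReal_lt_iff_lt_toReal h0.le h).mp hlt⟩
        · rintro ⟨h0, hlt⟩
          exact ⟨h0, (ENNReal.ofReal_lt_iff_lt_toReal h0.le h).mpr hlt⟩
      rw [this, Real.volume_Ioo, sub_zero, ENNReal.ofReal_toReal h]
  have h2 : (μ.prod volume) {p : α × ℝ | 0 < p.2 ∧ ENNReal.ofReal p.2 < f p.1}
      = ∫⁻ r in Ioi (0:ℝ), μ {x | ENNReal.ofReal r < f x} := by
    rw [Measure.prod_apply_symm hS,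
      ← lintegral_indicator measurableSet_Ioi (fun r => μ {x | ENNReal.ofReal r < f x})]
    congr 1
    ext r
    rcases lt_or_ge 0 r with h0 | h0
    · have he : (fun x => (x, r)) ⁻¹' {p : α × ℝ | 0 < p.2 ∧ ENNReal.ofReal p.2 < f p.1}
          = {x | ENNReal.ofReal r < f x} := by
        ext x; simp [h0]
      rw [he, Set.indicator_of_mem (show r ∈ Ioi (0:ℝ) from h0)]
    · have he : (fun x => (x, r)) ⁻¹' {p : α × ℝ | 0 < p.2 ∧ ENNReal.ofReal p.2 < f p.1}
          = (∅ : Set α) := by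
        ext x; simp [not_lt.mpr h0]
      rw [he, measure_empty, indicator_of_notMem (by simpa using h0)]
  rw [← h1, h2]

lemma sum_compact_1d {A B : Set ℝ} (hA : IsCompact A) (hB : IsCompact B)
    (hA0 : A.Nonempty) (hB0 : B.Nonempty) :
    volume A + volume B ≤ volume (A + B) := by
  set a := sSup A with ha_def
  set b := sInf B with hb_def
  have ha : a ∈ A := hA.sSup_mem hA0
  have hb : b ∈ B := hB.sInf_mem hB0
  set A' := (fun x => x + b) '' A with hA'def
  set B' := (fun y => a + y) '' B with hB'def
  have hA'sub : A' ⊆ A + B := by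
    rintro _ ⟨x, hx, rfl⟩; exact add_mem_add hx hb
  have hB'sub : B' ⊆ A + B := by
    rintro _ ⟨y, hy, rfl⟩; exact add_mem_add ha hy
  have hdisj : Disjoint (A' \ {a + b}) B' := by
    rw [Set.disjoint_left]
    rintro z ⟨hzA, hz⟩ hzB
    obtain ⟨x, hx, hxz⟩ := hzA
    obtain ⟨y, hy, hyz⟩ := hzB
    apply hz
    have h1 : x + b ≤ a + b := add_le_add_left (le_csSup hA.bddAbove hx) b
    have h2 : a + b ≤ a + y := add_le_add_right (csInf_le hB.bddBelow hy) a
    have : z = a + b := le_antisymm (hxz ▸ h1) (hyz ▸ h2)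
    simp [this]
  have hB'm : MeasurableSet B' := (hB.image (continuous_const.add continuous_id)).measurableSet
  have hvA' : volume A' = volume A := by
    have he : A' = b +ᵥ A := by
      ext z
      simp only [hA'def, Set.mem_image, Set.mem_vadd_set, vadd_eq_add]
      constructor
      · rintro ⟨x, hx, rfl⟩; exact ⟨x, hx, add_comm b x⟩
      · rintro ⟨x, hx, rfl⟩; exact ⟨x, hx, add_comm x b⟩
    rw [he, measure_vadd]
  have hvB' : volume B' = volume B := by
    have he : B' = a +ᵥ B := by
      ext z
      simp only [hB'def, Set.mem_image, Set.mem_vadd_set, vadd_eq_add]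
    rw [he, measure_vadd]
  calc volume A + volume B = volume (A' \ {a + b}) + volume B' := by
        rw [hvB', measure_diff_null (measure_singleton _), hvA']
    _ = volume ((A' \ {a + b}) ∪ B') := (measure_union hdisj hB'm).symm
    _ ≤ volume (A + B) := measure_mono (Set.union_subset (fun z hz => hA'sub hz.1) hB'sub)

lemma sum_meas_1d {A B : Set ℝ} (hA : MeasurableSet A) (hB : MeasurableSet B)
    (hA0 : A.Nonempty) (hB0 : B.Nonempty) :
    volume A + volume B ≤ volume (A + B) := by
  obtain ⟨p, hp⟩ := hA0
  obtain ⟨q, hq⟩ := hB0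
  have key : ∀ (KA KB : Set ℝ), KA ⊆ A → IsCompact KA → KB ⊆ B → IsCompact KB →
      volume KA + volume KB ≤ volume (A + B) := by
    intro KA KB hKAs hKA hKBs hKB
    have h1 : volume (KA ∪ {p}) + volume (KB ∪ {q}) ≤ volume ((KA ∪ {p}) + (KB ∪ {q})) :=
      sum_compact_1d (hKA.union isCompact_singleton) (hKB.union isCompact_singleton)
        ⟨p, Or.inr rfl⟩ ⟨q, Or.inr rfl⟩
    calc volume KA + volume KB ≤ volume (KA ∪ {p}) + volume (KB ∪ {q}) :=
          add_le_add (measure_mono Set.subset_union_left) (measure_mono Set.subset_union_left)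
      _ ≤ volume ((KA ∪ {p}) + (KB ∪ {q})) := h1
      _ ≤ volume (A + B) := measure_mono (Set.add_subset_add
          (Set.union_subset hKAs (by simpa using hp)) (Set.union_subset hKBs (by simpa using hq)))
  have hA' : volume A = ⨆ (KA : Set ℝ) (_ : KA ⊆ A ∧ IsCompact KA), volume KA := by
    rw [hA.measure_eq_iSup_isCompact]
    simp_rw [iSup_and]
  have hB' : volume B = ⨆ (KB : Set ℝ) (_ : KB ⊆ B ∧ IsCompact KB), volume KB := by
    rw [hB.measure_eq_iSup_isCompact]
    simp_rw [iSup_and]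
  rw [hA', hB']
  exact ENNReal.biSup_add_biSup_le'
    (p := fun KA => KA ⊆ A ∧ IsCompact KA) (q := fun KB => KB ⊆ B ∧ IsCompact KB)
    ⟨∅, Set.empty_subset _, isCompact_empty⟩ ⟨∅, Set.empty_subset _, isCompact_empty⟩
    (fun KA hKA KB hKB => key KA KB hKA.1 hKA.2 hKB.1 hKB.2)

lemma meas_superlevel_measurable {φ : ℝ → ℝ≥0∞} (hφ : Measurable φ) :
    Measurable (fun r : ℝ => volume {x : ℝ | ENNReal.ofReal r < φ x}) := by
  have hS : MeasurableSet {p : ℝ × ℝ | ENNReal.ofReal p.1 < φ p.2} :=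
    (((ENNReal.measurable_ofReal.comp measurable_fst)).prodMk
      (hφ.comp measurable_snd)) measurableSet_lt'
  exact measurable_measure_prodMk_left hS

lemma amgm_ennreal {t : ℝ} (ht : 0 < t) (ht1 : t < 1) (P Q : ℝ≥0∞) :
    P ^ (1 - t) * Q ^ t ≤ ENNReal.ofReal (1 - t) * P + ENNReal.ofReal t * Q := by
  have h1t : (0:ℝ) < 1 - t := by linarith
  rcases eq_or_ne P ∞ with hP | hP
  · rcases eq_or_ne Q 0 with hQ | hQ
    · simp [hQ, ENNReal.zero_rpow_of_pos ht]
    · have : ENNReal.ofReal (1 - t) * P = ∞ := by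
        rw [hP, ENNReal.mul_top]
        simp [ENNReal.ofReal_eq_zero, not_le.mpr h1t]
      rw [this]; simp
  rcases eq_or_ne Q ∞ with hQ | hQ
  · rcases eq_or_ne P 0 with hP0 | hP0
    · simp [hP0, ENNReal.zero_rpow_of_pos h1t]
    · have : ENNReal.ofReal t * Q = ∞ := by
        rw [hQ, ENNReal.mul_top]
        simp [ENNReal.ofReal_eq_zero, not_le.mpr ht]
      rw [this]; simp
  · lift P to ℝ≥0 using hP
    lift Q to ℝ≥0 using hQ
    have key := NNReal.geom_mean_le_arith_mean2_weighted
      (w₁ := (⟨1 - t, h1t.le⟩ : ℝ≥0)) (w₂ := (⟨t, ht.le⟩ : ℝ≥0)) (p₁ := P) (p₂ := Q)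
      (by apply NNReal.eq; exact sub_add_cancel 1 t)
    calc (P : ℝ≥0∞) ^ (1 - t) * (Q : ℝ≥0∞) ^ t
        = ((P ^ (1 - t) * Q ^ t : ℝ≥0) : ℝ≥0∞) := by
          rw [ENNReal.coe_mul, ENNReal.coe_rpow_of_nonneg _ h1t.le,
            ENNReal.coe_rpow_of_nonneg _ ht.le]
      _ ≤ ((@id ℝ≥0 ⟨1 - t, h1t.le⟩ * P + @id ℝ≥0 ⟨t, ht.le⟩ * Q : ℝ≥0) : ℝ≥0∞) := by
          exact_mod_cast key
      _ = ENNReal.ofReal (1 - t) * P + ENNReal.ofReal t * Q := by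
          rw [ENNReal.coe_add, ENNReal.coe_mul, ENNReal.coe_mul]
          congr 1
          · congr 1
            rw [ENNReal.ofReal]
            congr 1
            simp [Real.toNNReal, h1t.le]; rfl
          · congr 1
            rw [ENNReal.ofReal]
            congr 1
            simp [Real.toNNReal, ht.le]; rfl

lemma smul_superlevel_measurable {c : ℝ} (hc : c ≠ 0) {S : Set ℝ} (hS : MeasurableSet S) :
    MeasurableSet (c • S) := by
  have : c • S = (fun x : ℝ => c⁻¹ * x) ⁻¹' S := by
    ext z
    simp only [Set.mem_smul_set, Set.mem_preimage, smul_eq_mul]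
    constructor
    · rintro ⟨x, hx, rfl⟩; rwa [inv_mul_cancel_left₀ hc]
    · intro h; exact ⟨c⁻¹ * z, h, by rw [mul_inv_cancel_left₀ hc]⟩
  rw [this]
  exact (measurable_const_mul c⁻¹) hS

lemma volume_smul_1d (c : ℝ) (S : Set ℝ) (hc : 0 < c) :
    volume (c • S) = ENNReal.ofReal c * volume S := by
  rw [Measure.addHaar_smul]
  congr
  rw [Module.finrank_self, pow_one, abs_of_pos hc]

lemma pl_dim1 {t : ℝ} (ht : 0 < t) (ht1 : t < 1)
    {F G H : ℝ → ℝ≥0∞} (hF : Measurable F) (hG : Measurable G) (hH : Measurable H)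
    (hFtop : (⨆ x, F x) ≠ ∞) (hGtop : (⨆ x, G x) ≠ ∞)
    (hyp : ∀ x y, F x ^ (1 - t) * G y ^ t ≤ H ((1 - t) * x + t * y)) :
    (∫⁻ x, F x) ^ (1 - t) * (∫⁻ x, G x) ^ t ≤ ∫⁻ x, H x := by
  have h1t : (0:ℝ) < 1 - t := by linarith
  set mF := ⨆ x, F x with hmF_def
  set mG := ⨆ x, G x with hmG_def
  by_cases hmF0 : mF = 0
  · have hz : ∀ x, F x = 0 := fun x => le_antisymm (hmF0 ▸ le_iSup F x) zero_le
    have : ∫⁻ x, F x = 0 := by simp [hz]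
    rw [this, ENNReal.zero_rpow_of_pos h1t, zero_mul]
    exact zero_le
  by_cases hmG0 : mG = 0
  · have hz : ∀ x, G x = 0 := fun x => le_antisymm (hmG0 ▸ le_iSup G x) zero_le
    have : ∫⁻ x, G x = 0 := by simp [hz]
    rw [this, ENNReal.zero_rpow_of_pos ht, mul_zero]
    exact zero_le
  set c := mF ^ (1 - t) * mG ^ t with hc_def
  have hc0 : c ≠ 0 := by
    apply mul_ne_zero
    · simp [ENNReal.rpow_eq_zero_iff_of_pos h1t, hmF0]
    · simp [ENNReal.rpow_eq_zero_iff_of_pos ht, hmG0]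
  have hctop : c ≠ ∞ :=
    ENNReal.mul_ne_top (ENNReal.rpow_ne_top_of_nonneg h1t.le hFtop)
      (ENNReal.rpow_ne_top_of_nonneg ht.le hGtop)
  set kF := mF / c with hkF_def
  set kG := mG / c with hkG_def
  have hkF0 : kF ≠ 0 := (ENNReal.div_pos hmF0 hctop).ne'
  have hkFtop : kF ≠ ∞ := (ENNReal.div_lt_top hFtop hc0).ne
  have hkG0 : kG ≠ 0 := (ENNReal.div_pos hmG0 hctop).ne'
  have hkGtop : kG ≠ ∞ := (ENNReal.div_lt_top hGtop hc0).ne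
  have hkF0' : kF ^ (1 - t) ≠ 0 := by
    simp [ENNReal.rpow_eq_zero_iff_of_pos h1t, hkF0]
  have hkFtop' : kF ^ (1 - t) ≠ ∞ := ENNReal.rpow_ne_top_of_nonneg h1t.le hkFtop
  have kprod : kF ^ (1 - t) * kG ^ t = 1 := by
    rw [hkF_def, hkG_def, div_eq_mul_inv, div_eq_mul_inv,
      ENNReal.mul_rpow_of_nonneg _ _ h1t.le, ENNReal.mul_rpow_of_nonneg _ _ ht.le,
      mul_mul_mul_comm,
      ← ENNReal.rpow_add _ _ (ENNReal.inv_ne_zero.mpr hctop) (ENNReal.inv_ne_top.mpr hc0),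
      sub_add_cancel, ENNReal.rpow_one, ← hc_def, ENNReal.mul_inv_cancel hc0 hctop]
  -- key pointwise inequality
  have key : ∀ r ∈ Ioi (0:ℝ),
      ENNReal.ofReal (1 - t) * volume {x : ℝ | ENNReal.ofReal r < F x / kF}
        + ENNReal.ofReal t * volume {y : ℝ | ENNReal.ofReal r < G y / kG}
      ≤ volume {z : ℝ | ENNReal.ofReal r < H z} := by
    intro r hr
    rw [mem_Ioi] at hr
    have hsetF : {x : ℝ | ENNReal.ofReal r < F x / kF} = {x : ℝ | kF * ENNReal.ofReal r < F x} := by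
      ext x
      rw [mem_setOf_eq, mem_setOf_eq, ENNReal.lt_div_iff_mul_lt (Or.inl hkF0) (Or.inl hkFtop),
        mul_comm]
    have hsetG : {y : ℝ | ENNReal.ofReal r < G y / kG} = {y : ℝ | kG * ENNReal.ofReal r < G y} := by
      ext y
      rw [mem_setOf_eq, mem_setOf_eq, ENNReal.lt_div_iff_mul_lt (Or.inl hkG0) (Or.inl hkGtop),
        mul_comm]
    rw [hsetF, hsetG]
    set u := kF * ENNReal.ofReal r with hu_def
    set v := kG * ENNReal.ofReal r with hv_def
    by_cases hrc : c ≤ ENNReal.ofReal r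
    · have hFe : {x : ℝ | u < F x} = ∅ := by
        apply Set.eq_empty_of_forall_notMem
        intro x hx
        have h1 : F x ≤ mF := le_iSup F x
        have h2 : mF ≤ u := by
          have := mul_le_mul_right hrc kF
          rwa [ENNReal.div_mul_cancel hc0 hctop] at this
        exact absurd (lt_of_le_of_lt (h1.trans h2) hx) (lt_irrefl _)
      have hGe : {y : ℝ | v < G y} = ∅ := by
        apply Set.eq_empty_of_forall_notMem
        intro y hy
        have h1 : G y ≤ mG := le_iSup G y
        have h2 : mG ≤ v := by
          have := mul_le_mul_right hrc kG
          rwa [ENNReal.div_mul_cancel hc0 hctop] at this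
        exact absurd (lt_of_le_of_lt (h1.trans h2) hy) (lt_irrefl _)
      rw [hFe, hGe]
      simp
    · push_neg at hrc
      have hr0 : ENNReal.ofReal r ≠ 0 := (ENNReal.ofReal_pos.mpr hr).ne'
      have hu0 : u ≠ 0 := mul_ne_zero hkF0 hr0
      have hutop : u ≠ ∞ := ENNReal.mul_ne_top hkFtop ENNReal.ofReal_ne_top
      have hv0 : v ≠ 0 := mul_ne_zero hkG0 hr0
      have hvtop : v ≠ ∞ := ENNReal.mul_ne_top hkGtop ENNReal.ofReal_ne_top
      have hu_lt : u < mF := by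
        have h1 : kF * ENNReal.ofReal r < kF * c :=
          (ENNReal.mul_lt_mul_iff_right hkF0 hkFtop).mpr hrc
        rwa [mul_comm kF c, ENNReal.mul_div_cancel hc0 hctop] at h1
      have hv_lt : v < mG := by
        have h1 : kG * ENNReal.ofReal r < kG * c :=
          (ENNReal.mul_lt_mul_iff_right hkG0 hkGtop).mpr hrc
        rwa [mul_comm kG c, ENNReal.mul_div_cancel hc0 hctop] at h1
      obtain ⟨x₀, hx₀⟩ := lt_iSup_iff.mp hu_lt
      obtain ⟨y₀, hy₀⟩ := lt_iSup_iff.mp hv_lt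
      have huv : u ^ (1 - t) * v ^ t = ENNReal.ofReal r := by
        rw [hu_def, hv_def, ENNReal.mul_rpow_of_nonneg _ _ h1t.le,
          ENNReal.mul_rpow_of_nonneg _ _ ht.le, mul_mul_mul_comm,
          ← ENNReal.rpow_add _ _ hr0 ENNReal.ofReal_ne_top, sub_add_cancel, ENNReal.rpow_one,
          kprod, one_mul]
      have hsub : (1 - t) • {x : ℝ | u < F x} + t • {y : ℝ | v < G y}
          ⊆ {z : ℝ | ENNReal.ofReal r < H z} := by
        rintro z hz
        rw [Set.mem_add] at hz
        obtain ⟨a, ha, b, hb, rfl⟩ := hz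
        obtain ⟨x, hx, rfl⟩ := ha
        obtain ⟨y, hy, rfl⟩ := hb
        rw [mem_setOf_eq] at hx hy
        have hlt : ENNReal.ofReal r < F x ^ (1 - t) * G y ^ t := by
          rw [← huv]
          exact ENNReal.mul_lt_mul (ENNReal.rpow_lt_rpow hx h1t) (ENNReal.rpow_lt_rpow hy ht)
        calc ENNReal.ofReal r < F x ^ (1 - t) * G y ^ t := hlt
          _ ≤ H ((1 - t) * x + t * y) := hyp x y
        -- goal should now match membership
      have hmFset : MeasurableSet {x : ℝ | u < F x} :=
        measurableSet_lt measurable_const hF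
      have hmGset : MeasurableSet {y : ℝ | v < G y} :=
        measurableSet_lt measurable_const hG
      calc ENNReal.ofReal (1 - t) * volume {x : ℝ | u < F x}
            + ENNReal.ofReal t * volume {y : ℝ | v < G y}
          = volume ((1 - t) • {x : ℝ | u < F x}) + volume (t • {y : ℝ | v < G y}) := by
            rw [volume_smul_1d _ _ h1t, volume_smul_1d _ _ ht]
        _ ≤ volume ((1 - t) • {x : ℝ | u < F x} + t • {y : ℝ | v < G y}) :=
            sum_meas_1d (smul_superlevel_measurable h1t.ne' hmFset)
              (smul_superlevel_measurable ht.ne' hmGset)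
              (Set.Nonempty.smul_set ⟨x₀, hx₀⟩) (Set.Nonempty.smul_set ⟨y₀, hy₀⟩)
        _ ≤ volume {z : ℝ | ENNReal.ofReal r < H z} := measure_mono hsub
  -- integrate
  have hmes1 : Measurable fun r : ℝ => volume {x : ℝ | ENNReal.ofReal r < F x / kF} :=
    meas_superlevel_measurable (hF.div_const kF)
  have hmes2 : Measurable fun r : ℝ => volume {y : ℝ | ENNReal.ofReal r < G y / kG} :=
    meas_superlevel_measurable (hG.div_const kG)
  have step1 : ∫⁻ r in Ioi (0:ℝ),
      (ENNReal.ofReal (1 - t) * volume {x : ℝ | ENNReal.ofReal r < F x / kF}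
        + ENNReal.ofReal t * volume {y : ℝ | ENNReal.ofReal r < G y / kG})
      ≤ ∫⁻ z, H z := by
    rw [layercake volume hH]
    exact setLIntegral_mono (meas_superlevel_measurable hH) key
  have expand : ∫⁻ r in Ioi (0:ℝ),
      (ENNReal.ofReal (1 - t) * volume {x : ℝ | ENNReal.ofReal r < F x / kF}
        + ENNReal.ofReal t * volume {y : ℝ | ENNReal.ofReal r < G y / kG})
      = ENNReal.ofReal (1 - t) * ((∫⁻ x, F x) / kF)
        + ENNReal.ofReal t * ((∫⁻ x, G x) / kG) := by
    rw [lintegral_add_left (hmes1.const_mul _), lintegral_const_mul _ hmes1,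
      lintegral_const_mul _ hmes2]
    have e1 : ∫⁻ r in Ioi (0:ℝ), volume {x : ℝ | ENNReal.ofReal r < F x / kF}
        = (∫⁻ x, F x) / kF := by
      rw [← layercake volume (hF.div_const kF)]
      simp_rw [ENNReal.div_eq_inv_mul]
      rw [lintegral_const_mul _ hF]
    have e2 : ∫⁻ r in Ioi (0:ℝ), volume {y : ℝ | ENNReal.ofReal r < G y / kG}
        = (∫⁻ y, G y) / kG := by
      rw [← layercake volume (hG.div_const kG)]
      simp_rw [ENNReal.div_eq_inv_mul]
      rw [lintegral_const_mul _ hG]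
    rw [e1, e2]
  have final : (∫⁻ x, F x) ^ (1 - t) * (∫⁻ x, G x) ^ t
      = ((∫⁻ x, F x) / kF) ^ (1 - t) * ((∫⁻ x, G x) / kG) ^ t := by
    have kfac : (kF⁻¹) ^ (1 - t) * (kG⁻¹) ^ t = 1 := by
      rw [ENNReal.inv_rpow, ENNReal.inv_rpow,
        ← ENNReal.mul_inv (Or.inl hkF0') (Or.inl hkFtop'), kprod, inv_one]
    rw [div_eq_mul_inv, div_eq_mul_inv, ENNReal.mul_rpow_of_nonneg _ _ h1t.le,
      ENNReal.mul_rpow_of_nonneg _ _ ht.le, mul_mul_mul_comm, kfac, mul_one]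
  rw [final]
  calc ((∫⁻ x, F x) / kF) ^ (1 - t) * ((∫⁻ x, G x) / kG) ^ t
      ≤ ENNReal.ofReal (1 - t) * ((∫⁻ x, F x) / kF) + ENNReal.ofReal t * ((∫⁻ x, G x) / kG) :=
        amgm_ennreal ht ht1 _ _
    _ ≤ ∫⁻ z, H z := by rw [← expand]; exact step1

lemma bm_pi (n : ℕ) {t : ℝ} (ht : 0 < t) (ht1 : t < 1) : ∀ {A B : Set (Fin n → ℝ)},
    IsCompact A → IsCompact B → A.Nonempty → B.Nonempty →
    (volume A) ^ (1 - t) * (volume B) ^ t ≤ volume ((1 - t) • A + t • B) := by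
  have h1t : (0:ℝ) < 1 - t := by linarith
  induction n with
  | zero =>
    intro A B _ _ hA0 hB0
    haveI : Unique (Fin 0 → ℝ) := ⟨⟨fun i => i.elim0⟩, fun f => funext fun i => i.elim0⟩
    have huniv : ∀ (S : Set (Fin 0 → ℝ)), S.Nonempty → S = Set.univ := by
      intro S ⟨s, hs⟩
      ext x
      simp only [Set.mem_univ, iff_true]
      rwa [Subsingleton.elim x s]
    have hv : (volume : Measure (Fin 0 → ℝ)) Set.univ = 1 := by
      rw [volume_pi, Measure.pi_univ]
      simp
    obtain ⟨a, ha⟩ := hA0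
    obtain ⟨b, hb⟩ := hB0
    have hsum : ((1 - t) • A + t • B : Set (Fin 0 → ℝ)).Nonempty :=
      ⟨(1 - t) • a + t • b, Set.add_mem_add (Set.smul_mem_smul_set ha) (Set.smul_mem_smul_set hb)⟩
    rw [huniv _ hsum, huniv A ⟨a, ha⟩, huniv B ⟨b, hb⟩, hv]
    simp
  | succ n ih =>
    intro A B hAc hBc hA0 hB0
    set e := MeasurableEquiv.piFinSuccAbove (fun _ : Fin (n + 1) => ℝ) 0 with he_def
    have hmp : MeasurePreserving e volume volume :=
      volume_preserving_piFinSuccAbove (fun _ : Fin (n + 1) => ℝ) 0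
    have hce : Continuous (⇑e) :=
      (continuous_apply (0 : Fin (n+1))).prodMk (continuous_pi fun j => continuous_apply _)
    have he_lin : ∀ (x y : Fin (n+1) → ℝ) (s r : ℝ), e (s • x + r • y) = s • e x + r • e y :=
      fun _ _ _ _ => rfl
    -- images
    set A' := e '' A with hA'_def
    set B' := e '' B with hB'_def
    have hA'c : IsCompact A' := hAc.image hce
    have hB'c : IsCompact B' := hBc.image hce
    have himg : ∀ (S : Set (Fin (n+1) → ℝ)), e '' S = e.symm ⁻¹' S :=
      fun S => Equiv.image_eq_preimage_symm _ S
    have hvol_img : ∀ (S : Set (Fin (n+1) → ℝ)), MeasurableSet S → volume (e '' S) = volume S := by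
      intro S hS
      rw [himg]
      exact (MeasurePreserving.symm e hmp).measure_preimage hS.nullMeasurableSet
    have hsum_img : e '' ((1 - t) • A + t • B) = (1 - t) • A' + t • B' := by
      ext z
      constructor
      · rintro ⟨w, hw, rfl⟩
        rw [Set.mem_add] at hw
        obtain ⟨p, hp, q, hq, rfl⟩ := hw
        obtain ⟨x, hx, rfl⟩ := hp
        obtain ⟨y, hy, rfl⟩ := hq
        rw [he_lin]
        exact Set.add_mem_add (Set.smul_mem_smul_set ⟨x, hx, rfl⟩)
          (Set.smul_mem_smul_set ⟨y, hy, rfl⟩)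
      · intro hz
        rw [Set.mem_add] at hz
        obtain ⟨p, hp, q, hq, rfl⟩ := hz
        obtain ⟨x', hx', rfl⟩ := hp
        obtain ⟨y', hy', rfl⟩ := hq
        obtain ⟨x, hx, rfl⟩ := hx'
        obtain ⟨y, hy, rfl⟩ := hy'
        exact ⟨(1 - t) • x + t • y,
          Set.add_mem_add (Set.smul_mem_smul_set hx) (Set.smul_mem_smul_set hy),
          (he_lin x y (1 - t) t)⟩
    -- the combined set
    set S' := ((1 - t) • A' + t • B' : Set (ℝ × (Fin n → ℝ))) with hS'_def
    have hS'c : IsCompact S' := ((hA'c.smul (1 - t)).add (hB'c.smul t))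
    have hS'm : MeasurableSet S' := hS'c.measurableSet
    set F := fun σ : ℝ => volume (Prod.mk σ ⁻¹' A') with hF_def
    set G := fun τ : ℝ => volume (Prod.mk τ ⁻¹' B') with hG_def
    set Hf := fun s : ℝ => volume (Prod.mk s ⁻¹' S') with hHf_def
    have hFm : Measurable F := measurable_measure_prodMk_left hA'c.measurableSet
    have hGm : Measurable G := measurable_measure_prodMk_left hB'c.measurableSet
    have hHm : Measurable Hf := measurable_measure_prodMk_left hS'm
    -- boundedness
    have hFtop : (⨆ σ, F σ) ≠ ∞ := by
      have hfin : volume (Prod.snd '' A') < ∞ :=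
        (hA'c.image continuous_snd).measure_lt_top
      refine (lt_of_le_of_lt (iSup_le fun σ => ?_) hfin).ne
      exact measure_mono (fun y hy => ⟨(σ, y), hy, rfl⟩)
    have hGtop : (⨆ τ, G τ) ≠ ∞ := by
      have hfin : volume (Prod.snd '' B') < ∞ :=
        (hB'c.image continuous_snd).measure_lt_top
      refine (lt_of_le_of_lt (iSup_le fun τ => ?_) hfin).ne
      exact measure_mono (fun y hy => ⟨(τ, y), hy, rfl⟩)
    -- slices are compact
    have hslice_compact : ∀ (C : Set (ℝ × (Fin n → ℝ))), IsCompact C → ∀ σ : ℝ,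
        IsCompact (Prod.mk σ ⁻¹' C) := by
      intro C hC σ
      refine (hC.image continuous_snd).of_isClosed_subset
        (hC.isClosed.preimage (Continuous.prodMk_right σ)) ?_
      exact fun y hy => ⟨(σ, y), hy, rfl⟩
    -- PL hypothesis
    have hyp : ∀ σ τ : ℝ, F σ ^ (1 - t) * G τ ^ t ≤ Hf ((1 - t) * σ + t * τ) := by
      intro σ τ
      rcases Set.eq_empty_or_nonempty (Prod.mk σ ⁻¹' A') with hAe | hAne
      · rw [hF_def]
        simp only [hAe, measure_empty]
        rw [ENNReal.zero_rpow_of_pos h1t, zero_mul]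
        exact zero_le
      rcases Set.eq_empty_or_nonempty (Prod.mk τ ⁻¹' B') with hBe | hBne
      · rw [hG_def]
        simp only [hBe, measure_empty]
        rw [ENNReal.zero_rpow_of_pos ht, mul_zero]
        exact zero_le
      have hIH := ih (hslice_compact A' hA'c σ) (hslice_compact B' hB'c τ) hAne hBne
      refine hIH.trans (measure_mono ?_)
      rintro z hz
      rw [Set.mem_add] at hz
      obtain ⟨p, hp, q, hq, rfl⟩ := hz
      obtain ⟨x, hx, rfl⟩ := hp
      obtain ⟨y, hy, rfl⟩ := hq
      rw [Set.mem_preimage] at hx hy ⊢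
      have : ((1 - t) * σ + t * τ, (1 - t) • x + t • y)
          = (1 - t) • (σ, x) + t • (τ, y) := rfl
      rw [this]
      exact Set.add_mem_add (Set.smul_mem_smul_set hx) (Set.smul_mem_smul_set hy)
    -- Fubini
    have hfub : ∀ (C : Set (ℝ × (Fin n → ℝ))), MeasurableSet C →
        volume C = ∫⁻ σ : ℝ, volume (Prod.mk σ ⁻¹' C) := by
      intro C hC
      rw [Measure.volume_eq_prod, Measure.prod_apply hC]
    have key := pl_dim1 ht ht1 hFm hGm hHm hFtop hGtop hyp
    rw [← hfub A' hA'c.measurableSet, ← hfub B' hB'c.measurableSet, ← hfub S' hS'm] at key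
    rw [hA'_def, hB'_def] at key
    rw [hvol_img A hAc.measurableSet, hvol_img B hBc.measurableSet] at key
    rwa [← hsum_img, hvol_img _ (((hAc.smul (1-t)).add (hBc.smul t)).measurableSet)] at key

lemma bm_euclidean (d : ℕ) {t : ℝ} (ht : 0 < t) (ht1 : t < 1)
    {A B : Set (EuclideanSpace ℝ (Fin d))}
    (hAc : IsCompact A) (hBc : IsCompact B) (hA0 : A.Nonempty) (hB0 : B.Nonempty) :
    (volume A) ^ (1 - t) * (volume B) ^ t ≤ volume ((1 - t) • A + t • B) := by
  set e := (MeasurableEquiv.toLp 2 (Fin d → ℝ)).symm with he_def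
  have hmp : MeasurePreserving e volume volume :=
    EuclideanSpace.volume_preserving_symm_measurableEquiv_toLp (Fin d)
  have hce : Continuous (⇑e) := PiLp.continuous_ofLp _ _
  have he_lin : ∀ (x y : EuclideanSpace ℝ (Fin d)) (s r : ℝ),
      e (s • x + r • y) = s • e x + r • e y := fun _ _ _ _ => rfl
  have hvol_img : ∀ (S : Set (EuclideanSpace ℝ (Fin d))), MeasurableSet S →
      volume (e '' S) = volume S := by
    intro S hS
    rw [MeasurableEquiv.image_eq_preimage_symm]
    exact (MeasurePreserving.symm e hmp).measure_preimage hS.nullMeasurableSet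
  have hsum_img : ∀ (C D : Set (EuclideanSpace ℝ (Fin d))) (s r : ℝ),
      e '' (s • C + r • D) = s • (e '' C) + r • (e '' D) := by
    intro C D s r
    ext z
    constructor
    · rintro ⟨w, hw, rfl⟩
      rw [Set.mem_add] at hw
      obtain ⟨p, hp, q, hq, rfl⟩ := hw
      obtain ⟨x, hx, rfl⟩ := hp
      obtain ⟨y, hy, rfl⟩ := hq
      rw [he_lin]
      exact Set.add_mem_add (Set.smul_mem_smul_set ⟨x, hx, rfl⟩)
        (Set.smul_mem_smul_set ⟨y, hy, rfl⟩)
    · intro hz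
      rw [Set.mem_add] at hz
      obtain ⟨p, hp, q, hq, rfl⟩ := hz
      obtain ⟨x', hx', rfl⟩ := hp
      obtain ⟨y', hy', rfl⟩ := hq
      obtain ⟨x, hx, rfl⟩ := hx'
      obtain ⟨y, hy, rfl⟩ := hy'
      exact ⟨s • x + r • y,
        Set.add_mem_add (Set.smul_mem_smul_set hx) (Set.smul_mem_smul_set hy),
        (he_lin x y s r)⟩
  have key := bm_pi d ht ht1 (hAc.image hce) (hBc.image hce)
    (hA0.image _) (hB0.image _)
  rw [hvol_img A hAc.measurableSet, hvol_img B hBc.measurableSet] at key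
  rwa [← hsum_img, hvol_img _ (((hAc.smul (1-t)).add (hBc.smul t)).measurableSet)] at key

lemma smul_set_add_dist {E : Type*} [AddCommMonoid E] [Module ℝ E] (c : ℝ) (S T : Set E) :
    c • (S + T) = c • S + c • T := by
  ext z
  constructor
  · rintro ⟨w, hw, rfl⟩
    rw [Set.mem_add] at hw
    obtain ⟨s, hs, u, hu, rfl⟩ := hw
    show c • (s + u) ∈ c • S + c • T
    rw [smul_add]
    exact Set.add_mem_add (Set.smul_mem_smul_set hs) (Set.smul_mem_smul_set hu)
  · intro hz
    rw [Set.mem_add] at hz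
    obtain ⟨p, hp, q, hq, rfl⟩ := hz
    obtain ⟨s, hs, rfl⟩ := hp
    obtain ⟨u, hu, rfl⟩ := hq
    exact ⟨s + u, Set.add_mem_add hs hu, smul_add c s u⟩

lemma bm_scaled (d : ℕ) {V K : Set (EuclideanSpace ℝ (Fin d))}
    (hVc : IsCompact V) (hKc : IsCompact K) (hV0 : V.Nonempty) (hK0 : K.Nonempty)
    (hvol : volume V = volume K) (hKv0 : volume K ≠ 0) (hKvt : volume K ≠ ∞)
    {ε : ℝ} (hε : 0 < ε) :
    ENNReal.ofReal ((1 + ε) ^ d) * volume K ≤ volume (V + ε • K) := by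
  have h1ε : (0:ℝ) < 1 + ε := by linarith
  set t := ε / (1 + ε) with ht_def
  have ht : 0 < t := div_pos hε h1ε
  have ht1 : t < 1 := by
    rw [ht_def, div_lt_one h1ε]; linarith
  have h1mt : 1 - t = 1 / (1 + ε) := by
    rw [ht_def]; field_simp; ring
  have hkey : V + ε • K = (1 + ε) • ((1 - t) • V + t • K) := by
    rw [smul_set_add_dist, smul_smul, smul_smul, h1mt]
    rw [show (1 + ε) * (1 / (1 + ε)) = 1 by field_simp,
      show (1 + ε) * t = ε by rw [ht_def]; field_simp]
    rw [one_smul]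
  rw [hkey, Measure.addHaar_smul, finrank_euclideanSpace_fin,
    abs_of_pos (pow_pos h1ε d)]
  apply mul_le_mul_right
  calc volume K = volume K ^ (1 - t) * volume K ^ t := by
        rw [← ENNReal.rpow_add _ _ hKv0 hKvt, sub_add_cancel, ENNReal.rpow_one]
    _ = volume V ^ (1 - t) * volume K ^ t := by rw [hvol]
    _ ≤ volume ((1 - t) • V + t • K) := bm_euclidean d ht ht1 hVc hKc hV0 hK0

end WulffAux

open WulffAux

/-- The Wulff shape minimizes the anisotropic perimeter among compact convex sets of
the same volume. -/
theorem wulff_minimizes_anisotropic_perimeter (d : ℕ) (hd : 1 ≤ d)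
    (K : Set (EuclideanSpace ℝ (Fin d)))
    (hKc : IsCompact K) (hKconv : Convex ℝ K) (hKint : (interior K).Nonempty)
    (W : Set (EuclideanSpace ℝ (Fin d)) → ℝ)
    (hW : ∀ C : Set (EuclideanSpace ℝ (Fin d)), IsCompact C → Convex ℝ C →
      Filter.Tendsto
        (fun ε : ℝ => ((volume (C + ε • K)).toReal - (volume C).toReal) / ε)
        (nhdsWithin 0 (Set.Ioi 0)) (nhds (W C)))
    (V : Set (EuclideanSpace ℝ (Fin d))) (hVc : IsCompact V) (hVconv : Convex ℝ V)
    (hvol : volume V = volume K) :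
    W V ≥ d * (volume K).toReal ∧ W K = d * (volume K).toReal := by
  have hK0 : K.Nonempty := hKint.mono interior_subset
  have hKv0 : volume K ≠ 0 := by
    have h1 : 0 < volume (interior K) := isOpen_interior.measure_pos volume hKint
    exact (h1.trans_le (measure_mono interior_subset)).ne'
  have hKvt : volume K ≠ ∞ := hKc.measure_lt_top.ne
  have hV0 : V.Nonempty := by
    by_contra h
    rw [Set.not_nonempty_iff_eq_empty] at h
    rw [h, measure_empty] at hvol
    exact hKv0 hvol.symm
  set v := (volume K).toReal with hv_def
  -- the model function
  set φ : ℝ → ℝ := fun ε => ((1 + ε) ^ d - 1) / ε * v with hφ_def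
  have hφ_tendsto : Filter.Tendsto φ (nhdsWithin 0 (Set.Ioi 0)) (nhds (d * v)) := by
    have hderiv : HasDerivAt (fun x : ℝ => (1 + x) ^ d) ((d : ℝ) * (1 + 0) ^ (d - 1) * 1) 0 :=
      ((hasDerivAt_id (0:ℝ)).const_add 1).pow d
    have h1 : Filter.Tendsto (fun ε : ℝ => ((1 + ε) ^ d - 1) / ε)
        (nhdsWithin 0 (Set.Ioi 0)) (nhds (d : ℝ)) := by
      have h2 := hasDerivAt_iff_tendsto_slope.mp hderiv
      simp only [add_zero, one_pow, mul_one] at h2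
      have h3 : Filter.Tendsto (slope (fun x : ℝ => (1 + x) ^ d) 0)
          (nhdsWithin 0 (Set.Ioi 0)) (nhds (d : ℝ)) :=
        h2.mono_left (nhdsWithin_mono 0 (fun x hx => by
          simp only [Set.mem_compl_iff, Set.mem_singleton_iff]
          exact ne_of_gt hx))
      refine h3.congr (fun ε => ?_)
      rw [slope_def_field]
      simp
    have := h1.mul_const v
    exact this
  -- equality for K
  have hKW : W K = d * v := by
    have htd := hW K hKc hKconv
    have heq : ∀ ε ∈ Set.Ioi (0:ℝ),
        ((volume (K + ε • K)).toReal - (volume K).toReal) / ε = φ ε := by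
      intro ε hε
      rw [Set.mem_Ioi] at hε
      have hsum : K + ε • K = (1 + ε) • K := by
        rw [hKconv.add_smul (by norm_num : (0:ℝ) ≤ 1) hε.le, one_smul]
      rw [hsum, Measure.addHaar_smul, finrank_euclideanSpace_fin,
        abs_of_pos (pow_pos (by linarith : (0:ℝ) < 1 + ε) d), ENNReal.toReal_mul,
        ENNReal.toReal_ofReal (pow_pos (by linarith : (0:ℝ) < 1 + ε) d).le]
      rw [hφ_def, ← hv_def]
      field_simp
    have htd' : Filter.Tendsto
        (fun ε : ℝ => ((volume (K + ε • K)).toReal - (volume K).toReal) / ε)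
        (nhdsWithin 0 (Set.Ioi 0)) (nhds (d * v)) := by
      refine hφ_tendsto.congr' ?_
      filter_upwards [self_mem_nhdsWithin] with ε hε
      exact (heq ε hε).symm
    exact tendsto_nhds_unique htd htd'
  refine ⟨?_, hKW⟩
  -- inequality for V
  have hineq : ∀ ε ∈ Set.Ioi (0:ℝ),
      φ ε ≤ ((volume (V + ε • K)).toReal - (volume V).toReal) / ε := by
    intro ε hε
    rw [Set.mem_Ioi] at hε
    have h1ε : (0:ℝ) < 1 + ε := by linarith
    have hbm := bm_scaled d hVc hKc hV0 hK0 hvol hKv0 hKvt hε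
    have hfin : volume (V + ε • K) ≠ ∞ := (hVc.add (hKc.smul ε)).measure_lt_top.ne
    have hlhs_fin : ENNReal.ofReal ((1 + ε) ^ d) * volume K ≠ ∞ :=
      ENNReal.mul_ne_top ENNReal.ofReal_ne_top hKvt
    have htoReal : (1 + ε) ^ d * v ≤ (volume (V + ε • K)).toReal := by
      have := (ENNReal.toReal_le_toReal hlhs_fin hfin).mpr hbm
      rwa [ENNReal.toReal_mul, ENNReal.toReal_ofReal (pow_pos h1ε d).le, ← hv_def] at this
    rw [hvol, ← hv_def]
    show ((1 + ε) ^ d - 1) / ε * v ≤ ((volume (V + ε • K)).toReal - v) / ε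
    calc ((1 + ε) ^ d - 1) / ε * v = ((1 + ε) ^ d * v - v) / ε := by ring
      _ ≤ ((volume (V + ε • K)).toReal - v) / ε := by gcongr
  have htd := hW V hVc hVconv
  have hle : d * v ≤ W V := by
    refine le_of_tendsto_of_tendsto hφ_tendsto htd ?_
    filter_upwards [self_mem_nhdsWithin] with ε hε
    exact hineq ε hε
  exact hle
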